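/- Discrete opacity formula: for a ray segment [t_i, t_{i+1}] on which g(t) = f(p(t)) is differentiable and decreasing (g' < 0), the opacity α_i = 1 - exp(-∫_{t_i}^{t_{i+1}} ρ(t)dt), with ρ(t) = -g'(t)φ_s(g(t))/Φ_s(g(t)), equals (Φ_s(g(t_i)) - Φ_s(g(t_{i+1}))) / Φ_s(g(t_i)). -/

import Mathlib

open Real Filter MeasureTheory

/-- The sigmoid function `Φ_s(x) = (1 + e^{-sx})⁻¹`. -/
noncomputable def Phi (s x : ℝ) : ℝ := (1 + Real.exp (-s * x))⁻¹

/-- The logistic density `φ_s(x) = s e^{-sx} / (1 + e^{-sx})²`. -/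
noncomputable def phi (s x : ℝ) : ℝ :=
  s * Real.exp (-s * x) / (1 + Real.exp (-s * x)) ^ 2

lemma one_add_exp_pos (s x : ℝ) : 0 < 1 + Real.exp (-s * x) := by positivity

lemma Phi_pos (s x : ℝ) : 0 < Phi s x := by
  unfold Phi; positivity

lemma hasDerivAt_Phi (s x : ℝ) : HasDerivAt (Phi s) (phi s x) x := by
  have h1 : HasDerivAt (fun y : ℝ => -s * y) (-s) x := by
    simpa using (hasDerivAt_id x).const_mul (-s)
  have h2 : HasDerivAt (fun y : ℝ => 1 + Real.exp (-s * y))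
      (Real.exp (-s * x) * (-s)) x := (h1.exp.const_add 1)
  have h3 := h2.inv (ne_of_gt (one_add_exp_pos s x))
  refine h3.congr_deriv ?_
  unfold phi
  ring

lemma Phi_continuous (s : ℝ) : Continuous (Phi s) := by
  unfold Phi
  exact ((continuous_const.add ((continuous_const.mul continuous_id).rexp)).inv₀
    fun x => ne_of_gt (one_add_exp_pos s x))

lemma phi_continuous (s : ℝ) : Continuous (phi s) := by
  unfold phi
  apply Continuous.div
  · exact continuous_const.mul ((continuous_const.mul continuous_id).rexp)
  · exact ((continuous_const.add ((continuous_const.mul continuous_id).rexp)).pow 2)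
  · intro x
    have := one_add_exp_pos s x
    positivity

/-- Discrete opacity formula: if `g` is differentiable and decreasing on
`[t_i, t_{i+1}]`, then
`α_i = 1 - exp(-∫_{t_i}^{t_{i+1}} ρ) = (Φ_s(g(t_i)) - Φ_s(g(t_{i+1}))) / Φ_s(g(t_i))`. -/
theorem discrete_opacity_formula (s ti ti1 : ℝ) (hs : 0 < s) (hlt : ti < ti1)
    (g g' : ℝ → ℝ) (hg : ∀ t, HasDerivAt g (g' t) t) (hg' : Continuous g')
    (hdec : ∀ t ∈ Set.Icc ti ti1, g' t < 0) :
    1 - Real.exp (-(∫ t in ti..ti1, -g' t * phi s (g t) / Phi s (g t)))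
      = (Phi s (g ti) - Phi s (g ti1)) / Phi s (g ti) := by
  have hgc : Continuous g := by
    apply continuous_iff_continuousAt.2
    exact fun x => (hg x).continuousAt
  set F : ℝ → ℝ := fun t => Real.log (Phi s (g t)) with hF
  have hFd : ∀ t, HasDerivAt F (-(-g' t * phi s (g t) / Phi s (g t))) t := by
    intro t
    have h1 : HasDerivAt (fun y => Phi s (g y)) (phi s (g t) * g' t) t :=
      (hasDerivAt_Phi s (g t)).comp t (hg t)
    have h2 := (Real.hasDerivAt_log (ne_of_gt (Phi_pos s (g t)))).comp t h1
    refine h2.congr_deriv ?_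
    field_simp
  have hcont : Continuous (fun t => -(-g' t * phi s (g t) / Phi s (g t))) := by
    apply Continuous.neg
    apply Continuous.div
    · exact hg'.neg.mul ((phi_continuous s).comp hgc)
    · exact (Phi_continuous s).comp hgc
    · exact fun t => ne_of_gt (Phi_pos s (g t))
  have hint : (∫ t in ti..ti1, -(-g' t * phi s (g t) / Phi s (g t)))
      = F ti1 - F ti :=
    intervalIntegral.integral_eq_sub_of_hasDerivAt
      (fun t _ => hFd t) (hcont.intervalIntegrable ti ti1)
  have hint2 : (∫ t in ti..ti1, -g' t * phi s (g t) / Phi s (g t))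
      = F ti - F ti1 := by
    rw [intervalIntegral.integral_neg] at hint
    linarith
  rw [hint2]
  show 1 - Real.exp (-(Real.log (Phi s (g ti)) - Real.log (Phi s (g ti1))))
      = _
  rw [neg_sub, Real.exp_sub, Real.exp_log (Phi_pos s (g ti1)),
    Real.exp_log (Phi_pos s (g ti))]
  rw [sub_div, div_self (ne_of_gt (Phi_pos s (g ti)))]
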